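/- arXiv:2311.11156 — 2 statements merged into one kernel-verified Lean document; each statement's English description precedes it below -/
import Mathlib

section
/- Two-level high-order barrier invariance: let ψ⁰, ψ¹, ψ² : [0,T) → ℝ with ψ⁰, ψ¹ differentiable, ψ¹ = (ψ⁰)' + α₁ψ⁰, ψ² = (ψ¹)' + α₂ψ¹ for constants α₁, α₂ > 0. If ψ²(t) ≥ 0 for all t and ψ⁰(0) ≥ 0, ψ¹(0) ≥ 0, then ψ⁰(t) ≥ 0 and ψ¹(t) ≥ 0 for all t ∈ [0,T). -/
lemma key_gronwall (T : EReal) (α : ℝ) (hα : 0 < α) (ψ ψ' : ℝ → ℝ)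
    (hd : ∀ t : ℝ, 0 ≤ t → (t : EReal) < T →
      HasDerivWithinAt ψ (ψ' t) {s : ℝ | 0 ≤ s ∧ (s : EReal) < T} t)
    (hb : ∀ t : ℝ, 0 ≤ t → (t : EReal) < T → 0 ≤ ψ' t + α * ψ t)
    (h0 : 0 ≤ ψ 0) :
    ∀ t : ℝ, 0 ≤ t → (t : EReal) < T → 0 ≤ ψ t := by
  intro t ht htT
  set S : Set ℝ := {s : ℝ | 0 ≤ s ∧ (s : EReal) < T} with hS
  have hsub : Set.Icc (0:ℝ) t ⊆ S := fun s hs =>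
    ⟨hs.1, lt_of_le_of_lt (EReal.coe_le_coe_iff.2 hs.2) htT⟩
  set g : ℝ → ℝ := fun s => Real.exp (α * s) * ψ s with hg
  set g' : ℝ → ℝ := fun s => Real.exp (α * s) * α * ψ s + Real.exp (α * s) * ψ' s with hg'
  have hmono : MonotoneOn g (Set.Icc 0 t) := by
    apply monotoneOn_of_hasDerivWithinAt_nonneg (convex_Icc 0 t) (f' := g')
    · intro s hs
      have hcψ : ContinuousWithinAt ψ (Set.Icc 0 t) s :=
        ((hd s hs.1 (hsub hs).2).continuousWithinAt).mono hsub
      exact (((Real.continuous_exp.comp (continuous_const.mul continuous_id)).continuousWithinAt).mul hcψ)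
    · intro s hs
      have hsI : s ∈ Set.Icc (0:ℝ) t := interior_subset hs
      have he : HasDerivAt (fun s : ℝ => Real.exp (α * s)) (Real.exp (α * s) * α) s := by
        have h1 : HasDerivAt (fun s : ℝ => α * s) α s := by
          simpa using (hasDerivAt_id s).const_mul α
        exact (Real.hasDerivAt_exp (α * s)).comp s h1
      have hψ : HasDerivWithinAt ψ (ψ' s) (interior (Set.Icc 0 t)) s :=
        (hd s hsI.1 (hsub hsI).2).mono (fun x hx => hsub (interior_subset hx))
      exact he.hasDerivWithinAt.mul hψ
    · intro s hs
      have hsI : s ∈ Set.Icc (0:ℝ) t := interior_subset hs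
      have hb' := hb s hsI.1 (hsub hsI).2
      have hexp : 0 ≤ Real.exp (α * s) := (Real.exp_pos _).le
      have : 0 ≤ Real.exp (α * s) * (ψ' s + α * ψ s) := mul_nonneg hexp hb'
      simp only [g']
      nlinarith
  have h01 : g 0 ≤ g t := hmono (Set.left_mem_Icc.2 ht) (Set.right_mem_Icc.2 ht) ht
  have hg0 : g 0 = ψ 0 := by simp [g]
  have : 0 ≤ Real.exp (α * t) * ψ t := by
    have := h01; rw [hg0] at this; exact le_trans h0 this
  exact nonneg_of_mul_nonneg_right this (Real.exp_pos _)

/-- Two-level high-order barrier invariance: with `ψ¹ = (ψ⁰)' + α₁ψ⁰`,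
`ψ² = (ψ¹)' + α₂ψ¹` on `[0,T)` (`T ∈ (0,∞]`, modeled as `T : EReal`), `α₁, α₂ > 0`,
`ψ² ≥ 0` on `[0,T)`, and `ψ⁰(0) ≥ 0`, `ψ¹(0) ≥ 0`, we get `ψ⁰ ≥ 0` and `ψ¹ ≥ 0`
on `[0,T)`. -/
theorem two_level_HOBF_invariance (T : EReal) (hT : 0 < T)
    (α₁ α₂ : ℝ) (hα₁ : 0 < α₁) (hα₂ : 0 < α₂)
    (ψ0 ψ0' ψ1 ψ1' ψ2 : ℝ → ℝ)
    (hd0 : ∀ t : ℝ, 0 ≤ t → (t : EReal) < T →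
      HasDerivWithinAt ψ0 (ψ0' t) {s : ℝ | 0 ≤ s ∧ (s : EReal) < T} t)
    (hd1 : ∀ t : ℝ, 0 ≤ t → (t : EReal) < T →
      HasDerivWithinAt ψ1 (ψ1' t) {s : ℝ | 0 ≤ s ∧ (s : EReal) < T} t)
    (hrel1 : ∀ t : ℝ, 0 ≤ t → (t : EReal) < T → ψ1 t = ψ0' t + α₁ * ψ0 t)
    (hrel2 : ∀ t : ℝ, 0 ≤ t → (t : EReal) < T → ψ2 t = ψ1' t + α₂ * ψ1 t)
    (h2 : ∀ t : ℝ, 0 ≤ t → (t : EReal) < T → 0 ≤ ψ2 t)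
    (h00 : 0 ≤ ψ0 0) (h10 : 0 ≤ ψ1 0) :
    ∀ t : ℝ, 0 ≤ t → (t : EReal) < T → 0 ≤ ψ0 t ∧ 0 ≤ ψ1 t := by
  have h1 : ∀ t : ℝ, 0 ≤ t → (t : EReal) < T → 0 ≤ ψ1 t :=
    key_gronwall T α₂ hα₂ ψ1 ψ1' hd1
      (fun t ht htT => by rw [← hrel2 t ht htT]; exact h2 t ht htT) h10
  have h0 : ∀ t : ℝ, 0 ≤ t → (t : EReal) < T → 0 ≤ ψ0 t :=
    key_gronwall T α₁ hα₁ ψ0 ψ0' hd0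
      (fun t ht htT => by rw [← hrel1 t ht htT]; exact h1 t ht htT) h00
  exact fun t ht htT => ⟨h0 t ht htT, h1 t ht htT⟩
end

section
/- If φ² = φ̈⁰ + (α¹+α²)φ̇⁰ + α¹α²φ⁰ with α¹, α² > 0 and φ⁰ satisfies the linear ODE inequality φ²(t) ≥ 0 for all t, and additionally φ⁰(0) ≥ 0 and φ̇⁰(0) + α¹φ⁰(0) ≥ 0, then φ⁰(t) ≥ 0 for all t ≥ 0 in the domain. -/
lemma gronwall_nonneg {S : Set ℝ} (hS : Convex ℝ S) (h0S : (0:ℝ) ∈ S)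
    (hle : ∀ s ∈ S, 0 ≤ s) (α : ℝ) {f f' : ℝ → ℝ}
    (hf : ∀ t ∈ S, HasDerivWithinAt f (f' t) S t)
    (hineq : ∀ t ∈ S, 0 ≤ f' t + α * f t)
    (h0 : 0 ≤ f 0) : ∀ t ∈ S, 0 ≤ f t := by
  set g : ℝ → ℝ := fun t => Real.exp (α * t) * f t with hg
  have hg' : ∀ t ∈ S, HasDerivWithinAt g (Real.exp (α * t) * (f' t + α * f t)) S t := by
    intro t ht
    have he : HasDerivWithinAt (fun t => Real.exp (α * t)) (α * Real.exp (α * t)) S t := by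
      have := ((hasDerivAt_id t).const_mul α).exp
      simpa [mul_comm] using this.hasDerivWithinAt
    have := he.mul (hf t ht)
    refine this.congr_deriv ?_
    ring
  have hmono : MonotoneOn g S := by
    refine monotoneOn_of_hasDerivWithinAt_nonneg hS
      (fun t ht => (hg' t ht).continuousWithinAt)
      (fun t ht => ((hg' t (interior_subset ht)).mono interior_subset)) ?_
    intro t ht
    exact mul_nonneg (Real.exp_nonneg _) (hineq t (interior_subset ht))
  intro t ht
  have hgt : 0 ≤ Real.exp (α * t) * f t :=
    le_trans (by simpa [hg] using h0) (hmono h0S ht (hle t ht))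
  exact nonneg_of_mul_nonneg_right hgt (Real.exp_pos _)

/-- Safety guarantee of the second-order CBF: if
`φ² = (φ⁰)'' + (α¹+α²)(φ⁰)' + α¹α²φ⁰ ≥ 0` on `[0,T)` (`T ∈ (0,∞]`, as `T : EReal`),
with `α¹, α² > 0`, `φ⁰(0) ≥ 0` and `(φ⁰)'(0) + α¹φ⁰(0) ≥ 0`, then `φ⁰ ≥ 0` on `[0,T)`. -/
theorem second_order_CBF_safety (T : EReal) (hT : 0 < T)
    (α₁ α₂ : ℝ) (hα₁ : 0 < α₁) (hα₂ : 0 < α₂)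
    (φ0 dφ0 ddφ0 : ℝ → ℝ)
    (hd0 : ∀ t : ℝ, 0 ≤ t → (t : EReal) < T →
      HasDerivWithinAt φ0 (dφ0 t) {s : ℝ | 0 ≤ s ∧ (s : EReal) < T} t)
    (hdd0 : ∀ t : ℝ, 0 ≤ t → (t : EReal) < T →
      HasDerivWithinAt dφ0 (ddφ0 t) {s : ℝ | 0 ≤ s ∧ (s : EReal) < T} t)
    (h2 : ∀ t : ℝ, 0 ≤ t → (t : EReal) < T →
      0 ≤ ddφ0 t + (α₁ + α₂) * dφ0 t + α₁ * α₂ * φ0 t)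
    (h0 : 0 ≤ φ0 0) (h1 : 0 ≤ dφ0 0 + α₁ * φ0 0) :
    ∀ t : ℝ, 0 ≤ t → (t : EReal) < T → 0 ≤ φ0 t := by
  set S : Set ℝ := {s : ℝ | 0 ≤ s ∧ (s : EReal) < T} with hSdef
  have hconv : Convex ℝ S := by
    intro x hx y hy a b ha hb hab
    obtain ⟨hx0, hxT⟩ := hx
    obtain ⟨hy0, hyT⟩ := hy
    constructor
    · simp only [smul_eq_mul]
      positivity
    · have hmax : a • x + b • y ≤ max x y := by
        simp only [smul_eq_mul]
        nlinarith [le_max_left x y, le_max_right x y]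
      calc ((a • x + b • y : ℝ) : EReal) ≤ ((max x y : ℝ) : EReal) := by
            exact_mod_cast hmax
      _ < T := by rcases max_cases x y with ⟨h, _⟩ | ⟨h, _⟩ <;> rw [h] <;> assumption
  have h0S : (0:ℝ) ∈ S := ⟨le_refl _, hT⟩
  have hle : ∀ s ∈ S, 0 ≤ s := fun s hs => hs.1
  set ψ : ℝ → ℝ := fun t => dφ0 t + α₁ * φ0 t with hψ
  have hψ' : ∀ t ∈ S, HasDerivWithinAt ψ (ddφ0 t + α₁ * dφ0 t) S t := by
    intro t ht
    exact (hdd0 t ht.1 ht.2).add ((hd0 t ht.1 ht.2).const_mul α₁)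
  have hψnn : ∀ t ∈ S, 0 ≤ ψ t := by
    refine gronwall_nonneg hconv h0S hle α₂ hψ' ?_ (by simpa [hψ] using h1)
    intro t ht
    have := h2 t ht.1 ht.2
    simp only [hψ]
    nlinarith [this]
  have hφ : ∀ t ∈ S, HasDerivWithinAt φ0 (dφ0 t) S t := fun t ht => hd0 t ht.1 ht.2
  have := gronwall_nonneg hconv h0S hle α₁ hφ (fun t ht => by simpa [hψ] using hψnn t ht) h0
  intro t ht0 htT
  exact this t ⟨ht0, htT⟩
end
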